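/- Let F ∈ ℝ[x₁,…,xₙ] be a nonzero polynomial of degree d and let s ≥ d. If A ⊆ ℝ^n is a finite s-distance set on which F vanishes, then |A| ≤ C(n+s, n) − C(n+s−d, n). -/

import Mathlib

noncomputable section

open MvPolynomial

/-- The set of nonzero distances determined by a set `A` in Euclidean space. -/
def distSet {n : ℕ} (A : Set (EuclideanSpace ℝ (Fin n))) : Set ℝ :=
  {d | ∃ p ∈ A, ∃ q ∈ A, p ≠ q ∧ dist p q = d}

/-! ### Auxiliary dimension count: stars and bars -/

/-- Adding a slack variable: bounded-sum tuples ↔ exact-sum tuples with one more variable. -/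
def slackEquiv (n k : ℕ) :
    {g : Fin n → ℕ // ∑ i, g i ≤ k} ≃ {h : Fin (n+1) → ℕ // ∑ i, h i = k} where
  toFun g := ⟨Fin.snoc g.1 (k - ∑ i, g.1 i), by
    rw [Fin.sum_univ_castSucc]
    simp only [Fin.snoc_castSucc, Fin.snoc_last]
    omega⟩
  invFun h := ⟨fun i => h.1 i.castSucc, by
    have := h.2
    rw [Fin.sum_univ_castSucc] at this
    show ∑ i : Fin n, h.1 i.castSucc ≤ k
    omega⟩
  left_inv g := by
    ext i
    simp [Fin.snoc_castSucc]
  right_inv h := by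
    apply Subtype.ext
    funext i
    dsimp only
    refine Fin.lastCases ?_ (fun j => ?_) i
    · show Fin.snoc _ _ (Fin.last n) = _
      rw [Fin.snoc_last]
      have := h.2
      rw [Fin.sum_univ_castSucc] at this
      omega
    · show Fin.snoc _ _ (Fin.castSucc j) = _
      rw [Fin.snoc_castSucc]

def exactSumEquivSym (m k : ℕ) :
    {f : Fin m →₀ ℕ // (f.sum fun _ e => e) = k} ≃ Sym (Fin m) k where
  toFun f := ⟨Finsupp.toMultiset f.1, by
    rw [Finsupp.card_toMultiset]
    exact f.2⟩
  invFun s := ⟨Multiset.toFinsupp s.1, by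
    have : Multiset.card (Finsupp.toMultiset (Multiset.toFinsupp s.1)) = k := by
      rw [Multiset.toFinsupp_toMultiset]; exact s.2
    rw [Finsupp.card_toMultiset] at this
    exact this⟩
  left_inv f := by
    ext1
    simp [Finsupp.toMultiset_toFinsupp]
  right_inv s := by
    ext1
    simp [Multiset.toFinsupp_toMultiset]

def boundedSumEquivSym (n k : ℕ) :
    {f : Fin n →₀ ℕ // (f.sum fun _ e => e) ≤ k} ≃ Sym (Fin (n+1)) k :=
  ((Equiv.subtypeEquiv (Finsupp.equivFunOnFinite (α := Fin n) (M := ℕ)) (fun f => by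
      rw [Finsupp.sum_fintype _ _ (fun _ => rfl)]
      rfl)).trans
    ((slackEquiv n k).trans
      (Equiv.subtypeEquiv (Finsupp.equivFunOnFinite (α := Fin (n+1)) (M := ℕ)).symm (fun h => by
        rw [Finsupp.sum_fintype _ _ (fun _ => rfl)]
        simp)))).trans
    (exactSumEquivSym (n+1) k)

theorem finrank_restrictTotalDegree (n k : ℕ) :
    Module.finrank ℝ (restrictTotalDegree (Fin n) ℝ k) = (n + k).choose n := by
  classical
  have b : Module.Basis (Sym (Fin (n+1)) k) ℝ (restrictTotalDegree (Fin n) ℝ k) :=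
    (MvPolynomial.basisRestrictSupport ℝ
      {m : Fin n →₀ ℕ | (m.sum fun _ e => e) ≤ k}).reindex (boundedSumEquivSym n k)
  rw [Module.finrank_eq_card_basis b, Sym.card_sym_eq_multichoose, Nat.multichoose_eq]
  simp only [Fintype.card_fin]
  have h1 : n + 1 + k - 1 = n + k := by omega
  rw [h1, ← Nat.choose_symm (Nat.le_add_left k n)]
  congr 1
  omega

/-! ### Splitting monomials in two groups of variables -/

theorem mv_aeval_eq_eval {σ : Type*} (g : σ → ℝ) (p : MvPolynomial σ ℝ) :
    MvPolynomial.aeval g p = eval g p := by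
  rw [← MvPolynomial.coe_aeval_eq_eval]
  rfl

theorem poly_aeval_eq_eval (r : ℝ) (p : Polynomial ℝ) :
    Polynomial.aeval r p = p.eval r := by
  rw [← Polynomial.coe_aeval_eq_eval]

theorem monomial_split {n : ℕ} (μ : (Fin n ⊕ Fin n) →₀ ℕ) :
    ∃ α β : Fin n →₀ ℕ,
      ((α.sum fun _ e => e) + (β.sum fun _ e => e) = μ.sum fun _ e => e) ∧
      (monomial μ (1 : ℝ)) =
        rename Sum.inl (monomial α (1:ℝ)) * rename Sum.inr (monomial β (1:ℝ)) := by
  classical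
  set α := μ.comapDomain Sum.inl Sum.inl_injective.injOn with hα
  set β := μ.comapDomain Sum.inr Sum.inr_injective.injOn with hβ
  have hsplit : Finsupp.mapDomain Sum.inl α + Finsupp.mapDomain Sum.inr β = μ := by
    ext x
    cases x with
    | inl i =>
      rw [Finsupp.add_apply, Finsupp.mapDomain_apply Sum.inl_injective,
        Finsupp.mapDomain_notin_range _ _ (by simp), hα, Finsupp.comapDomain_apply, add_zero]
    | inr i =>
      rw [Finsupp.add_apply, Finsupp.mapDomain_notin_range _ _ (by simp),
        Finsupp.mapDomain_apply Sum.inr_injective, hβ, Finsupp.comapDomain_apply, zero_add]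
  refine ⟨α, β, ?_, ?_⟩
  · rw [← hsplit, Finsupp.sum_add_index' (fun _ => rfl) (fun _ _ _ => rfl),
      Finsupp.sum_mapDomain_index (fun _ => rfl) (fun _ _ _ => rfl),
      Finsupp.sum_mapDomain_index (fun _ => rfl) (fun _ _ _ => rfl)]
  · rw [rename_monomial, rename_monomial, monomial_mul, one_mul, hsplit]

/-! ### The Petrov–Pohoata duality argument -/

theorem nu_zero {n s : ℕ} (A : Finset (EuclideanSpace ℝ (Fin n)))
    (hA : (distSet (A : Set (EuclideanSpace ℝ (Fin n)))).ncard ≤ s)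
    (ν : {x // x ∈ A} → ℝ)
    (hν : ∀ p : MvPolynomial (Fin n) ℝ, p.totalDegree ≤ s →
      ∑ a : {x // x ∈ A}, ν a * eval (fun i => (a : EuclideanSpace ℝ (Fin n)) i) p = 0) :
    ν = 0 := by
  classical
  -- the distance set is finite
  have hfin : (distSet (A : Set (EuclideanSpace ℝ (Fin n)))).Finite := by
    refine Set.Finite.subset (Set.Finite.image2 dist A.finite_toSet A.finite_toSet) ?_
    rintro t ⟨p, hp, q, hq, hpq, rfl⟩
    exact Set.mem_image2_of_mem hp hq
  set Dfin : Finset ℝ := hfin.toFinset with hDfin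
  have hDcard : Dfin.card ≤ s := by
    rw [← Set.ncard_eq_toFinset_card _ hfin]
    exact hA
  -- the distance annihilating polynomial
  set Q : Polynomial ℝ := ∏ t ∈ Dfin, (Polynomial.X - Polynomial.C (t^2)) with hQ
  have hQ0 : Q.eval 0 ≠ 0 := by
    rw [hQ, Polynomial.eval_prod]
    refine Finset.prod_ne_zero_iff.mpr fun t ht => ?_
    simp only [Polynomial.eval_sub, Polynomial.eval_X, Polynomial.eval_C]
    have ht0 : t ≠ 0 := by
      rw [hDfin, Set.Finite.mem_toFinset] at ht
      obtain ⟨p, hp, q, hq, hpq, rfl⟩ := ht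
      exact dist_ne_zero.mpr hpq
    rw [zero_sub, neg_ne_zero]
    exact pow_ne_zero 2 ht0
  have hQvan : ∀ a ∈ A, ∀ b ∈ A, a ≠ b → Q.eval (dist a b ^ 2) = 0 := by
    intro a ha b hb hab
    have htmem : dist a b ∈ Dfin := by
      rw [hDfin, Set.Finite.mem_toFinset]
      exact ⟨a, ha, b, hb, hab, rfl⟩
    rw [hQ, Polynomial.eval_prod]
    exact Finset.prod_eq_zero htmem (by simp)
  have hQdeg : Q.natDegree ≤ s := by
    refine le_trans (Polynomial.natDegree_prod_le _ _) (le_trans ?_ hDcard)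
    refine le_trans (Finset.sum_le_sum (g := fun _ => 1) fun t _ => ?_) ?_
    · exact le_of_eq (Polynomial.natDegree_X_sub_C _)
    · rw [Finset.sum_const, smul_eq_mul, mul_one]
  -- the squared-distance polynomial in two groups of variables
  set S : MvPolynomial (Fin n ⊕ Fin n) ℝ :=
    ∑ i : Fin n, (X (Sum.inl i) - X (Sum.inr i))^2 with hS
  have hSdeg : S.totalDegree ≤ 2 := by
    refine le_trans (totalDegree_finset_sum _ _) (Finset.sup_le fun i _ => ?_)
    refine le_trans (totalDegree_pow _ _) ?_
    have h1 : (X (Sum.inl i) - X (Sum.inr i) : MvPolynomial (Fin n ⊕ Fin n) ℝ).totalDegree ≤ 1 := by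
      rw [sub_eq_add_neg]
      refine le_trans (totalDegree_add _ _) ?_
      rw [totalDegree_neg, totalDegree_X, totalDegree_X]
      simp
    omega
  have hSeval : ∀ v w : EuclideanSpace ℝ (Fin n),
      eval (Sum.elim (fun i => v i) (fun i => w i)) S = dist v w ^ 2 := by
    intro v w
    have h1 : dist v w ^ 2 = ∑ i, (v i - w i) ^ 2 := by
      rw [EuclideanSpace.dist_eq, Real.sq_sqrt (by positivity)]
      exact Finset.sum_congr rfl fun i _ => by rw [Real.dist_eq, sq_abs]
    rw [h1, hS]
    simp only [map_sum, map_pow, map_sub, eval_X, Sum.elim_inl, Sum.elim_inr]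
  set G : MvPolynomial (Fin n ⊕ Fin n) ℝ := Polynomial.aeval S Q with hG
  have hGdeg : G.totalDegree ≤ 2 * s := by
    rw [hG, Polynomial.aeval_eq_sum_range]
    refine le_trans (totalDegree_finset_sum _ _) (Finset.sup_le fun i hi => ?_)
    refine le_trans (totalDegree_smul_le _ _) (le_trans (totalDegree_pow _ _) ?_)
    have hi' : i ≤ s := by
      have := Finset.mem_range.mp hi
      omega
    calc i * S.totalDegree ≤ i * 2 := Nat.mul_le_mul_left _ hSdeg
      _ ≤ s * 2 := Nat.mul_le_mul_right _ hi'
      _ = 2 * s := Nat.mul_comm s 2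
  have hGeval : ∀ v w : EuclideanSpace ℝ (Fin n),
      eval (Sum.elim (fun i => v i) (fun i => w i)) G = Q.eval (dist v w ^ 2) := by
    intro v w
    have h2 := Polynomial.aeval_algHom_apply
      (MvPolynomial.aeval (R := ℝ) (Sum.elim (fun i => v i) (fun i => w i))) S Q
    rw [mv_aeval_eq_eval, mv_aeval_eq_eval, hSeval, poly_aeval_eq_eval] at h2
    rw [hG, ← h2]
  -- expansion of the evaluation of G into monomials
  have hGsum : ∀ g : Fin n ⊕ Fin n → ℝ,
      eval g G = ∑ μ ∈ G.support, MvPolynomial.coeff μ G * eval g (monomial μ 1) := by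
    intro g
    conv_lhs => rw [G.as_sum]
    rw [map_sum]
    refine Finset.sum_congr rfl fun μ _ => ?_
    rw [eval_monomial, eval_monomial, one_mul]
  -- the main double sum
  have hT2 : ∑ a : {x // x ∈ A}, ∑ b : {x // x ∈ A},
      ν a * ν b * eval (Sum.elim (fun i => (a : EuclideanSpace ℝ (Fin n)) i)
        (fun i => (b : EuclideanSpace ℝ (Fin n)) i)) G = 0 := by
    have key : ∀ (c : ℝ) (f g : {x // x ∈ A} → ℝ),
        ∑ a : {x // x ∈ A}, ∑ b : {x // x ∈ A}, c * (ν a * ν b * (f a * g b))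
          = c * (∑ a : {x // x ∈ A}, ν a * f a) * (∑ b : {x // x ∈ A}, ν b * g b) := by
      intro c f g
      rw [mul_assoc, Finset.sum_mul_sum, Finset.mul_sum]
      exact Finset.sum_congr rfl fun a _ => by
        rw [Finset.mul_sum]
        exact Finset.sum_congr rfl fun b _ => by ring
    calc ∑ a : {x // x ∈ A}, ∑ b : {x // x ∈ A},
        ν a * ν b * eval (Sum.elim (fun i => (a : EuclideanSpace ℝ (Fin n)) i)
          (fun i => (b : EuclideanSpace ℝ (Fin n)) i)) G
        = ∑ a : {x // x ∈ A}, ∑ b : {x // x ∈ A}, ∑ μ ∈ G.support,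
            MvPolynomial.coeff μ G * (ν a * ν b *
              eval (Sum.elim (fun i => (a : EuclideanSpace ℝ (Fin n)) i)
                (fun i => (b : EuclideanSpace ℝ (Fin n)) i)) (monomial μ 1)) := by
          refine Finset.sum_congr rfl fun a _ => Finset.sum_congr rfl fun b _ => ?_
          rw [hGsum, Finset.mul_sum]
          exact Finset.sum_congr rfl fun μ _ => by ring
      _ = ∑ μ ∈ G.support, ∑ a : {x // x ∈ A}, ∑ b : {x // x ∈ A},
            MvPolynomial.coeff μ G * (ν a * ν b *
              eval (Sum.elim (fun i => (a : EuclideanSpace ℝ (Fin n)) i)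
                (fun i => (b : EuclideanSpace ℝ (Fin n)) i)) (monomial μ 1)) := by
          rw [show (∑ a : {x // x ∈ A}, ∑ b : {x // x ∈ A}, ∑ μ ∈ G.support,
              MvPolynomial.coeff μ G * (ν a * ν b *
                eval (Sum.elim (fun i => (a : EuclideanSpace ℝ (Fin n)) i)
                  (fun i => (b : EuclideanSpace ℝ (Fin n)) i)) (monomial μ 1)))
              = ∑ a : {x // x ∈ A}, ∑ μ ∈ G.support, ∑ b : {x // x ∈ A},
              MvPolynomial.coeff μ G * (ν a * ν b *
                eval (Sum.elim (fun i => (a : EuclideanSpace ℝ (Fin n)) i)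
                  (fun i => (b : EuclideanSpace ℝ (Fin n)) i)) (monomial μ 1)) from
            Finset.sum_congr rfl fun a _ => Finset.sum_comm]
          exact Finset.sum_comm
      _ = 0 := by
          refine Finset.sum_eq_zero fun μ hμ => ?_
          obtain ⟨α, β, hαβ, hmono⟩ := monomial_split μ
          have hdeg : (α.sum fun _ e => e) + (β.sum fun _ e => e) ≤ 2 * s := by
            rw [hαβ]
            exact le_trans (le_totalDegree hμ) hGdeg
          have hfac : ∀ a b : {x // x ∈ A},
              eval (Sum.elim (fun i => (a : EuclideanSpace ℝ (Fin n)) i)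
                (fun i => (b : EuclideanSpace ℝ (Fin n)) i)) (monomial μ (1:ℝ))
              = eval (fun i => (a : EuclideanSpace ℝ (Fin n)) i) (monomial α 1) *
                eval (fun i => (b : EuclideanSpace ℝ (Fin n)) i) (monomial β 1) := by
            intro a b
            rw [hmono, map_mul, eval_rename, eval_rename]
            rfl
          rw [show ∑ a : {x // x ∈ A}, ∑ b : {x // x ∈ A},
              MvPolynomial.coeff μ G * (ν a * ν b *
                eval (Sum.elim (fun i => (a : EuclideanSpace ℝ (Fin n)) i)
                  (fun i => (b : EuclideanSpace ℝ (Fin n)) i)) (monomial μ 1))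
              = ∑ a : {x // x ∈ A}, ∑ b : {x // x ∈ A},
              MvPolynomial.coeff μ G * (ν a * ν b *
                (eval (fun i => (a : EuclideanSpace ℝ (Fin n)) i) (monomial α 1) *
                 eval (fun i => (b : EuclideanSpace ℝ (Fin n)) i) (monomial β 1))) from
            Finset.sum_congr rfl fun a _ => Finset.sum_congr rfl fun b _ => by rw [hfac]]
          rw [key]
          rcases le_or_gt (α.sum fun _ e => e) s with h | h
          · have h1 : ∑ a : {x // x ∈ A},
                ν a * eval (fun i => (a : EuclideanSpace ℝ (Fin n)) i) (monomial α (1:ℝ)) = 0 :=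
              hν _ (by rw [totalDegree_monomial _ one_ne_zero]; exact h)
            rw [h1, mul_zero, zero_mul]
          · have hβs : (β.sum fun _ e => e) ≤ s := by omega
            have h1 : ∑ b : {x // x ∈ A},
                ν b * eval (fun i => (b : EuclideanSpace ℝ (Fin n)) i) (monomial β (1:ℝ)) = 0 :=
              hν _ (by rw [totalDegree_monomial _ one_ne_zero]; exact hβs)
            rw [h1, mul_zero]
  -- the diagonal computation
  have hT1 : ∑ a : {x // x ∈ A}, ∑ b : {x // x ∈ A},
      ν a * ν b * eval (Sum.elim (fun i => (a : EuclideanSpace ℝ (Fin n)) i)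
        (fun i => (b : EuclideanSpace ℝ (Fin n)) i)) G
      = Q.eval 0 * ∑ a : {x // x ∈ A}, ν a ^ 2 := by
    rw [Finset.mul_sum]
    refine Finset.sum_congr rfl fun a _ => ?_
    rw [Finset.sum_eq_single a]
    · rw [hGeval, dist_self]
      norm_num
      ring
    · intro b _ hba
      rw [hGeval, hQvan _ a.2 _ b.2 (fun h => hba (Subtype.ext h.symm)), mul_zero]
    · intro h
      exact absurd (Finset.mem_univ a) h
  have hsum0 : ∑ a : {x // x ∈ A}, ν a ^ 2 = 0 := by
    rw [hT1] at hT2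
    rcases mul_eq_zero.mp hT2 with h | h
    · exact absurd h hQ0
    · exact h
  funext a
  have h2 := (Finset.sum_eq_zero_iff_of_nonneg
    (fun b _ => sq_nonneg (ν b))).mp hsum0 a (Finset.mem_univ a)
  exact pow_eq_zero_iff two_ne_zero |>.mp h2

/-- The evaluation map from polynomials of degree at most `s` to functions on `A`. -/
def evalMap (n s : ℕ) (A : Finset (EuclideanSpace ℝ (Fin n))) :
    restrictTotalDegree (Fin n) ℝ s →ₗ[ℝ] EuclideanSpace ℝ {x // x ∈ A} :=
  (WithLp.linearEquiv 2 ℝ ({x // x ∈ A} → ℝ)).symm.toLinearMap.comp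
    (LinearMap.pi fun a : {x // x ∈ A} =>
      (MvPolynomial.aeval (R := ℝ) fun i => (a : EuclideanSpace ℝ (Fin n)) i).toLinearMap.comp
        (restrictTotalDegree (Fin n) ℝ s).subtype)

theorem evalMap_apply {n s : ℕ} (A : Finset (EuclideanSpace ℝ (Fin n)))
    (p : restrictTotalDegree (Fin n) ℝ s) (a : {x // x ∈ A}) :
    evalMap n s A p a = eval (fun i => (a : EuclideanSpace ℝ (Fin n)) i) p.1 :=
  mv_aeval_eq_eval _ _

/-- Multiplication by a fixed polynomial of degree `d`. -/
def multMap {n : ℕ} (s d : ℕ) (F : MvPolynomial (Fin n) ℝ) (hFd : F.totalDegree = d)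
    (hsd : d ≤ s) :
    restrictTotalDegree (Fin n) ℝ (s - d) →ₗ[ℝ] restrictTotalDegree (Fin n) ℝ s where
  toFun g := ⟨F * g.1, by
    rw [mem_restrictTotalDegree]
    have h1 := totalDegree_mul F g.1
    have h2 := g.2
    rw [mem_restrictTotalDegree] at h2
    rw [hFd] at h1
    omega⟩
  map_add' g h := Subtype.ext (by simp [mul_add])
  map_smul' c g := Subtype.ext (by simp [Algebra.mul_smul_comm])

/-- Bound for `s`-distance sets on the zero set of a polynomial of degree `d ≤ s`. -/
theorem sdist_on_hypersurface {n s d : ℕ} (F : MvPolynomial (Fin n) ℝ)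
    (hF0 : F ≠ 0) (hFd : F.totalDegree = d) (hsd : d ≤ s)
    (A : Finset (EuclideanSpace ℝ (Fin n)))
    (hA : (distSet (A : Set (EuclideanSpace ℝ (Fin n)))).ncard ≤ s)
    (hvan : ∀ a ∈ A, eval (fun i => a i) F = 0) :
    A.card ≤ (n + s).choose n - (n + s - d).choose n := by
  classical
  -- surjectivity of evaluation via the Petrov–Pohoata lemma
  have hsurj : LinearMap.range (evalMap n s A) = ⊤ := by
    rw [← Submodule.orthogonal_eq_bot_iff, Submodule.eq_bot_iff]
    intro ν hνmem
    have hν : ∀ p : MvPolynomial (Fin n) ℝ, p.totalDegree ≤ s →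
        ∑ a : {x // x ∈ A}, ν a * eval (fun i => (a : EuclideanSpace ℝ (Fin n)) i) p = 0 := by
      intro p hp
      have hmem : p ∈ restrictTotalDegree (Fin n) ℝ s := by
        rw [mem_restrictTotalDegree]
        exact hp
      have h0 := (Submodule.mem_orthogonal _ ν).mp hνmem (evalMap n s A ⟨p, hmem⟩)
        (LinearMap.mem_range_self _ _)
      rw [PiLp.inner_apply] at h0
      simp only [RCLike.inner_apply, conj_trivial] at h0
      rw [← h0]
      refine Finset.sum_congr rfl fun a _ => ?_
      rw [evalMap_apply A ⟨p, hmem⟩ a]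
    exact WithLp.ofLp_injective 2 (nu_zero A hA ν hν)
  have hinj : Function.Injective (multMap s d F hFd hsd) := by
    intro g h hgh
    have h1 : F * g.1 = F * h.1 := congrArg Subtype.val hgh
    exact Subtype.ext (mul_left_cancel₀ hF0 h1)
  have hker : LinearMap.range (multMap s d F hFd hsd) ≤ LinearMap.ker (evalMap n s A) := by
    rintro _ ⟨g, rfl⟩
    rw [LinearMap.mem_ker]
    ext a
    show evalMap n s A (multMap s d F hFd hsd g) a = 0
    rw [evalMap_apply]
    show eval (fun i => (a : EuclideanSpace ℝ (Fin n)) i) (F * g.1) = 0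
    rw [map_mul, hvan _ a.2, zero_mul]
  -- rank-nullity bookkeeping
  have hrk := LinearMap.finrank_range_add_finrank_ker (evalMap n s A)
  rw [hsurj] at hrk
  have hcard : Module.finrank ℝ (⊤ : Submodule ℝ (EuclideanSpace ℝ {x // x ∈ A})) = A.card := by
    rw [finrank_top, finrank_euclideanSpace, Fintype.card_coe]
  have hWV : Module.finrank ℝ (restrictTotalDegree (Fin n) ℝ (s - d)) ≤
      Module.finrank ℝ (LinearMap.ker (evalMap n s A)) := by
    rw [← LinearMap.finrank_range_of_inj hinj]
    exact Submodule.finrank_mono hker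
  have hVfin : Module.finrank ℝ (restrictTotalDegree (Fin n) ℝ s) = (n + s).choose n :=
    finrank_restrictTotalDegree n s
  have hWfin : Module.finrank ℝ (restrictTotalDegree (Fin n) ℝ (s - d)) =
      (n + s - d).choose n := by
    rw [finrank_restrictTotalDegree]
    congr 1
    omega
  omega
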